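/- Let n ≥ 3 be an integer such that (ℤ/nℤ)^× is cyclic, let K be a number field of degree n with tr_{K/ℚ}(O_K) = ℤ, and let L be a number field. Then every isometry φ : (O_K^⊥, tr_{K/ℚ}) → (O_L^⊥, tr_{L/ℚ}) of quadratic ℤ-modules extends to an isometry (O_K, tr_{K/ℚ}) → (O_L, tr_{L/ℚ}). -/

import Mathlib

open NumberField

set_option maxHeartbeats 1000000
set_option synthInstance.maxHeartbeats 400000

private lemma aux_sq_cyc (n : ℕ) (hn : 3 ≤ n) (hcyc : IsCyclic (ZMod n)ˣ) (a : ZMod n)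
    (ha : a * a = 1) : a = 1 ∨ a = -1 := by
  haveI : NeZero n := ⟨by omega⟩
  classical
  set u : (ZMod n)ˣ := ⟨a, a, ha, ha⟩ with hu
  have hne : (-1 : (ZMod n)ˣ) ≠ 1 := by
    intro h
    have h2 : ((-1 : (ZMod n)ˣ) : ZMod n) = ((1 : (ZMod n)ˣ) : ZMod n) := by rw [h]
    simp only [Units.val_neg, Units.val_one] at h2
    have : ((2:ℕ) : ZMod n) = 0 := by push_cast; linear_combination -h2
    rw [ZMod.natCast_eq_zero_iff] at this
    have := Nat.le_of_dvd (by norm_num) this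
    omega
  by_contra hcon
  push_neg at hcon
  have hu1 : u ≠ 1 := by
    intro h; apply hcon.1
    have := congrArg (Units.val) h; simpa [hu] using this
  have hu2 : u ≠ -1 := by
    intro h; apply hcon.2
    have := congrArg (Units.val) h; simpa [hu] using this
  have hcard := IsCyclic.card_pow_eq_one_le (α := (ZMod n)ˣ) (n := 2) (by norm_num)
  have hsub : ({1, -1, u} : Finset (ZMod n)ˣ) ⊆ Finset.univ.filter (fun g => g ^ 2 = 1) := by
    intro g hg
    simp only [Finset.mem_insert, Finset.mem_singleton] at hg
    simp only [Finset.mem_filter, Finset.mem_univ, true_and]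
    rcases hg with rfl | rfl | rfl
    · simp
    · simp
    · ext; simpa [hu, pow_two] using ha
  have h3 : ({1, -1, u} : Finset (ZMod n)ˣ).card = 3 := by
    rw [Finset.card_insert_of_notMem, Finset.card_insert_of_notMem] <;>
      simp [hne, Ne.symm hne, hu1.symm, hu2.symm, hu1, hu2]
  have := Finset.card_le_card hsub
  omega

/-- If `(ℤ/nℤ)ˣ` is cyclic, `K` has degree `n ≥ 3` and `tr_{K/ℚ}(O_K) = ℤ`, then every
isometry `(O_K^⊥, tr) → (O_L^⊥, tr)` extends to an isometry `(O_K, tr) → (O_L, tr)`. -/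
theorem stmt_16 (n : ℕ) (hn : 3 ≤ n) (hcyc : IsCyclic (ZMod n)ˣ)
    (K L : Type*) [Field K] [NumberField K] [Field L] [NumberField L]
    (hdeg : Module.finrank ℚ K = n)
    (htr : LinearMap.range (Algebra.trace ℤ (𝓞 K)) = ⊤)
    (fK : 𝓞 K →ₗ[ℤ] 𝓞 K)
    (hfK : ∀ x : 𝓞 K, fK x = n • x - (Algebra.trace ℤ (𝓞 K) x) • (1 : 𝓞 K))
    (fL : 𝓞 L →ₗ[ℤ] 𝓞 L)
    (hfL : ∀ x : 𝓞 L, fL x = (Module.finrank ℚ L) • x -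
      (Algebra.trace ℤ (𝓞 L) x) • (1 : 𝓞 L))
    (φ : LinearMap.range fK ≃ₗ[ℤ] LinearMap.range fL)
    (hφ : ∀ x y : LinearMap.range fK,
      Algebra.trace ℤ (𝓞 L) ((φ x : 𝓞 L) * (φ y : 𝓞 L)) =
        Algebra.trace ℤ (𝓞 K) ((x : 𝓞 K) * (y : 𝓞 K))) :
    ∃ ψ : 𝓞 K ≃ₗ[ℤ] 𝓞 L,
      (∀ x y : 𝓞 K, Algebra.trace ℤ (𝓞 L) (ψ x * ψ y) =
        Algebra.trace ℤ (𝓞 K) (x * y)) ∧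
      (∀ x : LinearMap.range fK, ψ (x : 𝓞 K) = (φ x : 𝓞 L)) := by
  classical
  set T := Algebra.trace ℤ (𝓞 K) with hT
  set S := Algebra.trace ℤ (𝓞 L) with hS
  set m := Module.finrank ℚ L with hm
  have hm1 : 1 ≤ m := Module.finrank_pos
  have hn0 : (n : ℤ) ≠ 0 := by exact_mod_cast (by omega : n ≠ 0)
  have trK1 : T 1 = (n : ℤ) := by
    have h := Algebra.trace_algebraMap (R := ℤ) (S := 𝓞 K) 1
    simp only [map_one] at h
    rw [hT, h, RingOfIntegers.rank, hdeg]; simp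
  have trL1 : S 1 = (m : ℤ) := by
    have h := Algebra.trace_algebraMap (R := ℤ) (S := 𝓞 L) 1
    simp only [map_one] at h
    rw [hS, h, RingOfIntegers.rank]; simp; exact hm.symm
  -- trace vanishes on the ranges
  have htrfK : ∀ x, T (fK x) = 0 := by
    intro x
    rw [hfK x]
    simp only [map_sub, map_nsmul, map_zsmul, smul_eq_mul, trK1]
    ring
  have htrfL : ∀ x, S (fL x) = 0 := by
    intro x
    rw [hfL x]
    simp only [map_sub, map_nsmul, map_zsmul, smul_eq_mul, trL1]
    ring
  have htrV : ∀ v : LinearMap.range fK, T ↑v = 0 := by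
    rintro ⟨_, y, rfl⟩; exact htrfK y
  have htrW : ∀ w : LinearMap.range fL, S ↑w = 0 := by
    rintro ⟨_, y, rfl⟩; exact htrfL y
  -- degree of L is n
  have hdegL : m = n := by
    have rkK : Module.rank ℤ (𝓞 K) = (n : Cardinal) := by
      rw [← Module.finrank_eq_rank, RingOfIntegers.rank, hdeg]
    have rkL : Module.rank ℤ (𝓞 L) = (m : Cardinal) := by
      rw [← Module.finrank_eq_rank, RingOfIntegers.rank]
    have hrT : Module.rank ℤ (LinearMap.range T) = 1 := by
      rw [hT, htr, rank_top, Module.rank_self]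
    have hrS : Module.rank ℤ (LinearMap.range S) = 1 := by
      refine le_antisymm ?_ ?_
      · simpa [Module.rank_self] using Submodule.rank_le (LinearMap.range S)
      · have hmem : ((m : ℤ)) ∈ LinearMap.range S := ⟨1, trL1⟩
        have hj : Function.Injective
            (LinearMap.toSpanSingleton ℤ (LinearMap.range S) ⟨(m : ℤ), hmem⟩) := by
          intro r r' h
          have h2 : r • ((m : ℤ)) = r' • ((m : ℤ)) := by
            have := congrArg (Subtype.val) h
            simpa [LinearMap.toSpanSingleton_apply] using this
          have : (m : ℤ) ≠ 0 := by exact_mod_cast (by omega : m ≠ 0)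
          simpa [smul_eq_mul, mul_left_inj' this] using h2
        simpa [Module.rank_self] using LinearMap.rank_le_of_injective _ hj
    obtain ⟨a, ha⟩ := Cardinal.lt_aleph0.mp
      (lt_of_le_of_lt ((Submodule.rank_le (LinearMap.ker T)).trans_eq rkK)
        (Cardinal.nat_lt_aleph0 n))
    obtain ⟨b, hb⟩ := Cardinal.lt_aleph0.mp
      (lt_of_le_of_lt ((Submodule.rank_le (LinearMap.ker S)).trans_eq rkL)
        (Cardinal.nat_lt_aleph0 m))
    have c1 := LinearMap.lift_rank_range_add_rank_ker T
    have c2 := LinearMap.lift_rank_range_add_rank_ker S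
    rw [hrT, ha, rkK] at c1
    rw [hrS, hb, rkL] at c2
    simp only [Cardinal.lift_one, Cardinal.lift_natCast] at c1 c2
    have c1' : n = 1 + a := by
      have : ((1 + a : ℕ) : Cardinal) = ((n : ℕ) : Cardinal) := by push_cast; exact c1
      exact_mod_cast this.symm
    have c2' : m = 1 + b := by
      have : ((1 + b : ℕ) : Cardinal) = ((m : ℕ) : Cardinal) := by push_cast; exact c2
      exact_mod_cast this.symm
    have hVle : LinearMap.range fK ≤ LinearMap.ker T := by
      rintro x ⟨y, rfl⟩; exact htrfK y
    have hWle : LinearMap.range fL ≤ LinearMap.ker S := by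
      rintro x ⟨y, rfl⟩; exact htrfL y
    have hgK : Module.rank ℤ (LinearMap.ker T) ≤ Module.rank ℤ (LinearMap.range fK) := by
      have hinj : Function.Injective
          (LinearMap.codRestrict (LinearMap.range fK)
            (fK ∘ₗ (LinearMap.ker T).subtype) (fun u => ⟨u, rfl⟩)) := by
        intro u u' h
        have h2 : fK ↑u = fK ↑u' := by
          have := congrArg (Subtype.val) h
          exact this
        rw [hfK, hfK] at h2
        have hu : Algebra.trace ℤ (𝓞 K) ↑u = 0 := by rw [← hT]; exact u.2
        have hu' : Algebra.trace ℤ (𝓞 K) ↑u' = 0 := by rw [← hT]; exact u'.2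
        simp only [hT, hu, hu', zero_smul, sub_zero] at h2
        have h3 : (n : 𝓞 K) * (↑u - ↑u') = 0 := by
          have : (n : 𝓞 K) * ↑u = (n : 𝓞 K) * ↑u' := by
            rw [← nsmul_eq_mul, ← nsmul_eq_mul]; exact h2
          rw [mul_sub, this, sub_self]
        rcases mul_eq_zero.mp h3 with h4 | h4
        · exact absurd h4 (by exact_mod_cast (by omega : n ≠ 0))
        · exact Subtype.ext (by linear_combination (norm := abel) h4)
      exact LinearMap.rank_le_of_injective _ hinj
    have hgL : Module.rank ℤ (LinearMap.ker S) ≤ Module.rank ℤ (LinearMap.range fL) := by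
      have hinj : Function.Injective
          (LinearMap.codRestrict (LinearMap.range fL)
            (fL ∘ₗ (LinearMap.ker S).subtype) (fun u => ⟨u, rfl⟩)) := by
        intro u u' h
        have h2 : fL ↑u = fL ↑u' := by
          have := congrArg (Subtype.val) h
          exact this
        rw [hfL, hfL] at h2
        have hu : Algebra.trace ℤ (𝓞 L) ↑u = 0 := by rw [← hS]; exact u.2
        have hu' : Algebra.trace ℤ (𝓞 L) ↑u' = 0 := by rw [← hS]; exact u'.2
        simp only [hS, hu, hu', zero_smul, sub_zero] at h2
        have h3 : (m : 𝓞 L) * (↑u - ↑u') = 0 := by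
          have : (m : 𝓞 L) * ↑u = (m : 𝓞 L) * ↑u' := by
            rw [← nsmul_eq_mul, ← nsmul_eq_mul]; exact h2
          rw [mul_sub, this, sub_self]
        rcases mul_eq_zero.mp h3 with h4 | h4
        · exact absurd h4 (by exact_mod_cast (by omega : m ≠ 0))
        · exact Subtype.ext (by linear_combination (norm := abel) h4)
      exact LinearMap.rank_le_of_injective _ hinj
    have hV : Module.rank ℤ (LinearMap.range fK) = (a : Cardinal) := by
      rw [← ha]
      exact le_antisymm (Submodule.rank_mono hVle) hgK
    have hW : Module.rank ℤ (LinearMap.range fL) = (b : Cardinal) := by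
      rw [← hb]
      exact le_antisymm (Submodule.rank_mono hWle) hgL
    have := φ.lift_rank_eq
    rw [hV, hW] at this
    simp only [Cardinal.lift_natCast] at this
    have hab : a = b := by exact_mod_cast this
    omega
  -- restated versions with integer scalars
  have trL1n : S 1 = (n : ℤ) := by rw [trL1, hdegL]
  have hfK' : ∀ x : 𝓞 K, fK x = (n:ℤ) • x - T x • (1 : 𝓞 K) := by
    intro x; rw [hfK x, natCast_zsmul]
  have hfL' : ∀ z : 𝓞 L, fL z = (n:ℤ) • z - S z • (1 : 𝓞 L) := by
    intro z; rw [hfL z, hdegL, natCast_zsmul]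
  -- cancellation
  have cancelK : ∀ x y : 𝓞 K, (n:ℤ) • x = (n:ℤ) • y → x = y := by
    intro x y h
    have h3 : ((n:ℤ) : 𝓞 K) * (x - y) = 0 := by
      rw [mul_sub, ← zsmul_eq_mul, ← zsmul_eq_mul, h, sub_self]
    rcases mul_eq_zero.mp h3 with h4 | h4
    · exact absurd h4 (by exact_mod_cast (by omega : n ≠ 0))
    · linear_combination (norm := abel) h4
  have cancelL : ∀ x y : 𝓞 L, (n:ℤ) • x = (n:ℤ) • y → x = y := by
    intro x y h
    have h3 : ((n:ℤ) : 𝓞 L) * (x - y) = 0 := by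
      rw [mul_sub, ← zsmul_eq_mul, ← zsmul_eq_mul, h, sub_self]
    rcases mul_eq_zero.mp h3 with h4 | h4
    · exact absurd h4 (by exact_mod_cast (by omega : n ≠ 0))
    · linear_combination (norm := abel) h4
  -- trace product identities
  have idK : ∀ x x' : 𝓞 K, T (fK x * fK x') =
      (n:ℤ) * ((n:ℤ) * T (x * x') - T x * T x') := by
    intro x x'
    have e : fK x * fK x' = ((n:ℤ) * (n:ℤ)) • (x * x') - ((n:ℤ) * T x') • x
        - ((n:ℤ) * T x) • x' + (T x * T x') • (1 : 𝓞 K) := by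
      rw [hfK' x, hfK' x']
      simp only [zsmul_eq_mul]
      push_cast
      ring
    rw [e]
    simp only [map_add, map_sub, map_smul, smul_eq_mul, trK1]
    ring
  have idL : ∀ y y' : 𝓞 L, S (fL y * fL y') =
      (n:ℤ) * ((n:ℤ) * S (y * y') - S y * S y') := by
    intro y y'
    have e : fL y * fL y' = ((n:ℤ) * (n:ℤ)) • (y * y') - ((n:ℤ) * S y') • y
        - ((n:ℤ) * S y) • y' + (S y * S y') • (1 : 𝓞 L) := by
      rw [hfL' y, hfL' y']
      simp only [zsmul_eq_mul]
      push_cast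
      ring
    rw [e]
    simp only [map_add, map_sub, map_smul, smul_eq_mul, trL1n]
    ring
  have memK : ∀ x : 𝓞 K, fK x ∈ LinearMap.range fK := fun x => LinearMap.mem_range_self fK x
  have memL : ∀ z : 𝓞 L, fL z ∈ LinearMap.range fL := fun z => LinearMap.mem_range_self fL z
  -- master congruence
  have ML : ∀ (x x' : 𝓞 K) (y y' : 𝓞 L),
      fL y = ↑(φ ⟨fK x, memK x⟩) → fL y' = ↑(φ ⟨fK x', memK x'⟩) →
      (n:ℤ) ∣ T x * T x' - S y * S y' := by
    intro x x' y y' hy hy'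
    have h1 := hφ ⟨fK x, memK x⟩ ⟨fK x', memK x'⟩
    rw [← hy, ← hy'] at h1
    rw [idL, idK] at h1
    have h2 : (n:ℤ) * S (y * y') - S y * S y' = (n:ℤ) * T (x * x') - T x * T x' :=
      mul_left_cancel₀ hn0 h1
    exact ⟨T (x * x') - S (y * y'), by linarith⟩
  -- choose x₀ with trace 1
  have h1mem : (1 : ℤ) ∈ LinearMap.range T := by rw [hT, htr]; trivial
  obtain ⟨x₀, hx₀⟩ := h1mem
  -- y₁ with fL y₁ = φ(fK x₀)
  obtain ⟨y₁, hy₁⟩ := (φ ⟨fK x₀, memK x₀⟩).2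
  set a : ℤ := S y₁ with ha
  have hA : (n:ℤ) ∣ 1 - a * a := by
    have := ML x₀ x₀ y₁ y₁ hy₁ hy₁
    rwa [hx₀, one_mul, ← ha] at this
  -- ε
  obtain ⟨ε, hε1, hε2⟩ : ∃ ε : ℤ, ε * ε = 1 ∧ (n:ℤ) ∣ a - ε := by
    have haZ : ((a : ZMod n)) * (a : ZMod n) = 1 := by
      have : ((1 - a * a : ℤ) : ZMod n) = 0 := by
        rw [ZMod.intCast_zmod_eq_zero_iff_dvd]; exact_mod_cast hA
      push_cast at this
      linear_combination -this
    rcases aux_sq_cyc n hn hcyc _ haZ with h | h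
    · refine ⟨1, by ring, ?_⟩
      have : ((a - 1 : ℤ) : ZMod n) = 0 := by push_cast [h]; ring
      rw [ZMod.intCast_zmod_eq_zero_iff_dvd] at this
      exact_mod_cast this
    · refine ⟨-1, by ring, ?_⟩
      have : ((a - (-1) : ℤ) : ZMod n) = 0 := by push_cast [h]; ring
      rw [ZMod.intCast_zmod_eq_zero_iff_dvd] at this
      exact_mod_cast this
  obtain ⟨s, hs⟩ := hε2
  set y₀ : 𝓞 L := y₁ - s • 1 with hy₀def
  have hy₀ : (n:ℤ) • y₀ = ↑(φ ⟨fK x₀, memK x₀⟩) + ε • (1 : 𝓞 L) := by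
    have h1 : fL y₁ = ↑(φ ⟨fK x₀, memK x₀⟩) := hy₁
    rw [hfL' y₁, ← ha] at h1
    rw [hy₀def, smul_sub, smul_smul, show (n:ℤ) * s = a - ε from by linarith, ← h1, sub_smul]
    abel
  have htry₀ : S y₀ = ε := by
    have h2 := congrArg S hy₀
    simp only [map_add, map_smul, smul_eq_mul, trL1n, htrW] at h2
    apply mul_left_cancel₀ hn0
    rw [h2]; ring
  -- the projection to trace zero part
  set PK : 𝓞 K → 𝓞 K := fun x => x - T x • x₀ with hPK
  have TPK : ∀ x, T (PK x) = 0 := by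
    intro x
    simp only [hPK, map_sub, map_smul, smul_eq_mul, hx₀, mul_one, sub_self]
  have hfK0 : ∀ u : 𝓞 K, T u = 0 → fK u = (n:ℤ) • u := by
    intro u hu; rw [hfK' u, hu, zero_smul, sub_zero]
  have hfL0 : ∀ u : 𝓞 L, S u = 0 → fL u = (n:ℤ) • u := by
    intro u hu; rw [hfL' u, hu, zero_smul, sub_zero]
  -- Θ
  have keyΘ : ∀ x : 𝓞 K, ∃ z : 𝓞 L, (n:ℤ) • z = ↑(φ ⟨fK (PK x), memK (PK x)⟩) := by
    intro x
    obtain ⟨y, hy⟩ := (φ ⟨fK (PK x), memK (PK x)⟩).2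
    have hdvd := ML (PK x) x₀ y y₁ hy hy₁
    rw [TPK, zero_mul, ← ha, zero_sub, dvd_neg] at hdvd
    have hdvd2 : (n:ℤ) ∣ S y := by
      have e : S y = S y * (1 - a * a) + (S y * a) * a := by ring
      rw [e]
      exact dvd_add (hA.mul_left _) (hdvd.mul_right _)
    obtain ⟨t, ht⟩ := hdvd2
    refine ⟨y - t • 1, ?_⟩
    rw [smul_sub, smul_smul, show (n:ℤ) * t = S y from ht.symm, ← hfL' y, hy]
  choose Θ hΘ using keyΘ
  set PL : 𝓞 L → 𝓞 L := fun z => z - (ε * S z) • y₀ with hPL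
  have TPL : ∀ z, S (PL z) = 0 := by
    intro z
    simp only [hPL, map_sub, map_smul, smul_eq_mul, htry₀]
    have : ε * S z * ε = S z * (ε * ε) := by ring
    rw [this, hε1, mul_one, sub_self]
  have keyΘ' : ∀ z : 𝓞 L, ∃ w : 𝓞 K,
      (n:ℤ) • w = ↑(φ.symm ⟨fL (PL z), memL (PL z)⟩) := by
    intro z
    obtain ⟨x, hx⟩ := (φ.symm ⟨fL (PL z), memL (PL z)⟩).2
    have hx2 : fL (PL z) = ↑(φ ⟨fK x, memK x⟩) := by
      have h4 : (⟨fK x, memK x⟩ : LinearMap.range fK) =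
          φ.symm ⟨fL (PL z), memL (PL z)⟩ := Subtype.ext hx
      rw [h4, LinearEquiv.apply_symm_apply]
    have hdvd := ML x x₀ (PL z) y₁ hx2 hy₁
    rw [hx₀, mul_one, TPL, zero_mul, sub_zero] at hdvd
    obtain ⟨t, ht⟩ := hdvd
    refine ⟨x - t • 1, ?_⟩
    rw [smul_sub, smul_smul, show (n:ℤ) * t = T x from ht.symm, ← hfK' x, hx]
  choose Θ' hΘ' using keyΘ'
  -- traces of Θ, Θ'
  have hΘtr : ∀ x, S (Θ x) = 0 := by
    intro x
    have := congrArg S (hΘ x)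
    simp only [map_smul, smul_eq_mul] at this
    rw [htrW] at this
    exact mul_left_cancel₀ hn0 (by rw [this, mul_zero])
  have hΘ'tr : ∀ z, T (Θ' z) = 0 := by
    intro z
    have := congrArg T (hΘ' z)
    simp only [map_smul, smul_eq_mul] at this
    rw [htrV] at this
    exact mul_left_cancel₀ hn0 (by rw [this, mul_zero])
  -- the maps
  set ψf : 𝓞 K → 𝓞 L := fun x => T x • y₀ + Θ x with hψf
  set ψg : 𝓞 L → 𝓞 K := fun z => (ε * S z) • x₀ + Θ' z with hψg
  have hPKdecomp : ∀ x : 𝓞 K, x = T x • x₀ + PK x := by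
    intro x; simp only [hPK]; abel
  have hPLdecomp : ∀ z : 𝓞 L, z = (ε * S z) • y₀ + PL z := by
    intro z; simp only [hPL]; abel
  -- Θ is additive / ℤ-linear
  have hΘcongr : ∀ x x' : 𝓞 K, PK x = PK x' → Θ x = Θ x' := by
    intro x x' h
    apply cancelL
    rw [hΘ x, hΘ x']
    congr 2
    exact Subtype.ext (by rw [h])
  have hΘadd : ∀ x x' : 𝓞 K, Θ (x + x') = Θ x + Θ x' := by
    intro x x'
    apply cancelL
    rw [smul_add, hΘ, hΘ, hΘ]
    have hPadd : PK (x + x') = PK x + PK x' := by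
      simp only [hPK, map_add, add_smul]; abel
    have h5 : (⟨fK (PK (x + x')), memK _⟩ : LinearMap.range fK) =
        ⟨fK (PK x), memK _⟩ + ⟨fK (PK x'), memK _⟩ := by
      refine Subtype.ext ?_
      simp only [Submodule.coe_add]
      rw [hPadd, map_add]
    rw [h5, map_add, Submodule.coe_add]
  have hΘsmul : ∀ (c : ℤ) (x : 𝓞 K), Θ (c • x) = c • Θ x := by
    intro c x
    apply cancelL
    rw [smul_comm, hΘ, hΘ]
    have hPsmul : PK (c • x) = c • PK x := by
      simp only [hPK, map_smul, smul_eq_mul, smul_sub, smul_smul]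
    have h5 : (⟨fK (PK (c • x)), memK _⟩ : LinearMap.range fK) =
        c • ⟨fK (PK x), memK _⟩ := by
      refine Subtype.ext ?_
      simp only [SetLike.val_smul]
      rw [hPsmul, map_smul]
    rw [h5, map_smul, SetLike.val_smul]
  -- inverse identities
  have hΘΘ' : ∀ x : 𝓞 K, Θ' (ψf x) = PK x := by
    intro x
    apply cancelK
    rw [hΘ' (ψf x)]
    have hSψ : S (ψf x) = ε * T x := by
      simp only [hψf, map_add, map_smul, smul_eq_mul, htry₀, hΘtr, add_zero, mul_comm]
    have hPLψ : PL (ψf x) = Θ x := by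
      simp only [hPL, hSψ]; simp only [hψf]
      rw [show ε * (ε * T x) = T x * (ε * ε) by ring, hε1, mul_one]
      abel
    have h6 : (⟨fL (PL (ψf x)), memL _⟩ : LinearMap.range fL) = φ ⟨fK (PK x), memK _⟩ := by
      refine Subtype.ext ?_
      show fL (PL (ψf x)) = ↑(φ ⟨fK (PK x), memK _⟩)
      rw [hPLψ, hfL0 _ (hΘtr x), hΘ]
    rw [h6, LinearEquiv.symm_apply_apply]
    show fK (PK x) = (n:ℤ) • PK x
    exact hfK0 _ (TPK x)
  have hΘ'Θ : ∀ z : 𝓞 L, Θ (ψg z) = PL z := by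
    intro z
    apply cancelL
    rw [hΘ (ψg z)]
    have hTψ : T (ψg z) = ε * S z := by
      simp only [hψg, map_add, map_smul, smul_eq_mul, hx₀, mul_one, hΘ'tr, add_zero]
    have hPKψ : PK (ψg z) = Θ' z := by
      simp only [hPK, hTψ]; simp only [hψg]
      abel
    have h6 : (⟨fK (PK (ψg z)), memK _⟩ : LinearMap.range fK) =
        φ.symm ⟨fL (PL z), memL _⟩ := by
      refine Subtype.ext ?_
      show fK (PK (ψg z)) = ↑(φ.symm ⟨fL (PL z), memL _⟩)
      rw [hPKψ, hfK0 _ (hΘ'tr z), hΘ']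
    rw [h6, LinearEquiv.apply_symm_apply]
    show fL (PL z) = (n:ℤ) • PL z
    exact hfL0 _ (TPL z)
  have hleft : ∀ x : 𝓞 K, ψg (ψf x) = x := by
    intro x
    have hSψ : S (ψf x) = ε * T x := by
      simp only [hψf, map_add, map_smul, smul_eq_mul, htry₀, hΘtr, add_zero, mul_comm]
    rw [hψg]
    simp only
    rw [hΘΘ' x, hSψ, show ε * (ε * T x) = T x * (ε * ε) by ring, hε1, mul_one]
    exact (hPKdecomp x).symm
  have hright : ∀ z : 𝓞 L, ψf (ψg z) = z := by
    intro z
    have hTψ : T (ψg z) = ε * S z := by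
      simp only [hψg, map_add, map_smul, smul_eq_mul, hx₀, mul_one, hΘ'tr, add_zero]
    rw [hψf]
    simp only
    rw [hΘ'Θ z, hTψ]
    exact (hPLdecomp z).symm
  -- linearity of ψf
  have hadd : ∀ x x' : 𝓞 K, ψf (x + x') = ψf x + ψf x' := by
    intro x x'
    simp only [hψf, map_add, hΘadd, add_smul]
    abel
  have hsmul : ∀ (c : ℤ) (x : 𝓞 K), ψf (c • x) = c • ψf x := by
    intro c x
    simp only [hψf, map_smul, smul_eq_mul, hΘsmul, smul_add, mul_smul]
  -- isometry
  have hiso : ∀ x x' : 𝓞 K, S (ψf x * ψf x') = T (x * x') := by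
    intro x x'
    have hexpand : ∀ (c c' : ℤ) (u u' w : 𝓞 L),
        (c • w + u) * (c' • w + u') =
          (c * c') • (w * w) + c • (w * u') + c' • (u * w) + u * u' := by
      intro c c' u u' w
      simp only [zsmul_eq_mul]
      push_cast
      ring
    set A : 𝓞 L := ↑(φ ⟨fK x₀, memK x₀⟩) + ε • (1 : 𝓞 L) with hAdef
    have hnψ : ∀ x : 𝓞 K, (n:ℤ) • ψf x = T x • A + ↑(φ ⟨fK (PK x), memK _⟩) := by
      intro x
      rw [hψf]
      simp only
      rw [smul_add, smul_comm, hy₀, hΘ, hAdef]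
    have SAA : S (A * A) = (n:ℤ) * ((n:ℤ) * T (x₀ * x₀)) := by
      have eA : A * A = (↑(φ ⟨fK x₀, memK x₀⟩) * ↑(φ ⟨fK x₀, memK x₀⟩) : 𝓞 L)
          + ε • (↑(φ ⟨fK x₀, memK x₀⟩) : 𝓞 L) + ε • (↑(φ ⟨fK x₀, memK x₀⟩) : 𝓞 L)
          + (ε * ε) • (1 : 𝓞 L) := by
        rw [hAdef]; simp only [zsmul_eq_mul]; push_cast; ring
      rw [eA]
      simp only [map_add, map_smul, smul_eq_mul, trL1n, htrW, hε1]
      rw [hφ, idK, hx₀]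
      ring
    have SAB : ∀ x' : 𝓞 K, S (A * ↑(φ ⟨fK (PK x'), memK (PK x')⟩)) =
        (n:ℤ) * ((n:ℤ) * T (x₀ * PK x')) := by
      intro x'
      have eA : A * ↑(φ ⟨fK (PK x'), memK (PK x')⟩) =
          (↑(φ ⟨fK x₀, memK x₀⟩) * ↑(φ ⟨fK (PK x'), memK (PK x')⟩) : 𝓞 L)
          + ε • (↑(φ ⟨fK (PK x'), memK (PK x')⟩) : 𝓞 L) := by
        rw [hAdef]; simp only [zsmul_eq_mul]; ring
      rw [eA]
      simp only [map_add, map_smul, smul_eq_mul, htrW]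
      rw [hφ, idK, TPK]
      ring
    have SBA : ∀ x : 𝓞 K, S (↑(φ ⟨fK (PK x), memK (PK x)⟩) * A) =
        (n:ℤ) * ((n:ℤ) * T (PK x * x₀)) := by
      intro x
      have eA : ↑(φ ⟨fK (PK x), memK (PK x)⟩) * A =
          (↑(φ ⟨fK (PK x), memK (PK x)⟩) * ↑(φ ⟨fK x₀, memK x₀⟩) : 𝓞 L)
          + ε • (↑(φ ⟨fK (PK x), memK (PK x)⟩) : 𝓞 L) := by
        rw [hAdef]; simp only [zsmul_eq_mul]; ring
      rw [eA]
      simp only [map_add, map_smul, smul_eq_mul, htrW]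
      rw [hφ, idK, TPK]
      ring
    have SBB : S (↑(φ ⟨fK (PK x), memK (PK x)⟩) * ↑(φ ⟨fK (PK x'), memK (PK x')⟩) : 𝓞 L) =
        (n:ℤ) * ((n:ℤ) * T (PK x * PK x')) := by
      rw [hφ, idK, TPK, TPK]
      ring
    have hexp : T (x * x') = T x * T x' * T (x₀ * x₀) + T x * T (x₀ * PK x')
        + T x' * T (PK x * x₀) + T (PK x * PK x') := by
      have e : x * x' = (T x * T x') • (x₀ * x₀) + T x • (x₀ * PK x')
          + T x' • (PK x * x₀) + PK x * PK x' := by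
        conv_lhs => rw [hPKdecomp x, hPKdecomp x']
        simp only [zsmul_eq_mul]; push_cast; ring
      rw [e]
      simp only [map_add, map_smul, smul_eq_mul]
    apply mul_left_cancel₀ hn0
    apply mul_left_cancel₀ hn0
    have lhs1 : ((n:ℤ) • ψf x) * ((n:ℤ) • ψf x') = ((n:ℤ)*(n:ℤ)) • (ψf x * ψf x') := by
      simp only [zsmul_eq_mul]; push_cast; ring
    have h7 : S (((n:ℤ) • ψf x) * ((n:ℤ) • ψf x')) =
        (n:ℤ) * ((n:ℤ) * S (ψf x * ψf x')) := by
      rw [lhs1, map_smul, smul_eq_mul]; ring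
    have h8 : S (((n:ℤ) • ψf x) * ((n:ℤ) • ψf x')) = (n:ℤ) * ((n:ℤ) * T (x * x')) := by
      rw [hnψ x, hnψ x']
      rw [hexpand (T x) (T x') (↑(φ ⟨fK (PK x), memK (PK x)⟩))
        (↑(φ ⟨fK (PK x'), memK (PK x')⟩)) A]
      simp only [map_add, map_smul, smul_eq_mul]
      rw [SAA, SAB x', SBA x, SBB, hexp]
      ring
    rw [← h7, h8]
  -- package
  let ψ : 𝓞 K ≃ₗ[ℤ] 𝓞 L :=
    { toFun := ψf
      map_add' := hadd
      map_smul' := fun c x => hsmul c x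
      invFun := ψg
      left_inv := hleft
      right_inv := hright }
  refine ⟨ψ, fun x y => hiso x y, fun v => ?_⟩
  show ψf ↑v = ↑(φ v)
  have hTv : T ↑v = 0 := htrV v
  rw [hψf]
  simp only
  rw [hTv, zero_smul, zero_add]
  apply cancelL
  rw [hΘ]
  have hPv : PK (↑v : 𝓞 K) = ↑v := by simp only [hPK, hTv, zero_smul, sub_zero]
  have h9 : (⟨fK (PK ↑v), memK (PK ↑v)⟩ : LinearMap.range fK) = (n:ℤ) • v := by
    refine Subtype.ext ?_
    show fK (PK ↑v) = ↑((n:ℤ) • v)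
    rw [hPv, hfK0 _ hTv, SetLike.val_smul]
  rw [h9, map_smul, SetLike.val_smul]
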